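/- Suppose the optimal transport problem between μ and ν for a separable cost c has a unique solution π, and let (X₁,X₂,Y₁,Y₂) be a random vector with law π. Then X₁ and Y₂ are conditionally independent given (X₂,Y₁), and X₂ and Y₁ are conditionally independent given (X₁,Y₂). -/

import Mathlib

open MeasureTheory ProbabilityTheory
open scoped ENNReal ProbabilityTheory

noncomputable section

variable {X₁ X₂ Y₁ Y₂ : Type*} [MeasurableSpace X₁] [MeasurableSpace X₂]
  [MeasurableSpace Y₁] [MeasurableSpace Y₂]

/-- `π` is a transportation plan (coupling) between `μ` and `ν`. -/
def IsCoupling {A B : Type*} [MeasurableSpace A] [MeasurableSpace B]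
    (π : Measure (A × B)) (μ : Measure A) (ν : Measure B) : Prop :=
  π.map Prod.fst = μ ∧ π.map Prod.snd = ν

/-- The minimal transportation (Wasserstein) cost for the cost `c`. -/
noncomputable def Wc {A B : Type*} [MeasurableSpace A] [MeasurableSpace B]
    (c : A → B → ℝ≥0∞) (μ : Measure A) (ν : Measure B) : ℝ≥0∞ :=
  ⨅ π ∈ {π : Measure (A × B) | IsCoupling π μ ν}, ∫⁻ p, c p.1 p.2 ∂π

/-- `(f1, f2)` is a cardinal flow between `μ ∈ P(X₁ × X₂)` and `ν ∈ P(Y₁ × Y₂)`: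
the marginal of `f1` on `X = X₁ × X₂` is `μ`, the marginal of `f2` on `Y = Y₁ × Y₂` is `ν`,
and `f1`, `f2` have the same marginal on `Y₁ × X₂`. -/
def IsCardinalFlow (μ : Measure (X₁ × X₂)) (ν : Measure (Y₁ × Y₂))
    (f1 : Measure ((X₁ × X₂) × Y₁)) (f2 : Measure (X₂ × (Y₁ × Y₂))) : Prop :=
  f1.map Prod.fst = μ ∧ f2.map Prod.snd = ν ∧
    f1.map (fun p => (p.2, p.1.2)) = f2.map (fun p => (p.2.1, p.1))

/-- The set of cardinal flows between `μ` and `ν`. -/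
def Flows (μ : Measure (X₁ × X₂)) (ν : Measure (Y₁ × Y₂)) :
    Set (Measure ((X₁ × X₂) × Y₁) × Measure (X₂ × (Y₁ × Y₂))) :=
  {F | IsProbabilityMeasure F.1 ∧ IsProbabilityMeasure F.2 ∧ IsCardinalFlow μ ν F.1 F.2}

/-- The cardinal flow functional `CT(f¹,f²) = ∫ c₁ df¹ + ∫ c₂ df²`. -/
noncomputable def CT (c₁ : X₁ → Y₁ → ℝ≥0∞) (c₂ : X₂ → Y₂ → ℝ≥0∞)
    (F : Measure ((X₁ × X₂) × Y₁) × Measure (X₂ × (Y₁ × Y₂))) : ℝ≥0∞ :=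
  ∫⁻ q, c₁ q.1.1 q.2 ∂F.1 + ∫⁻ q, c₂ q.1 q.2.2 ∂F.2

/-- `ζ` is a pivot measure between `μ` and `ν` for the separable cost `c₁ + c₂`:
some optimal cardinal flow glues on `ζ`. -/
def IsPivot (μ : Measure (X₁ × X₂)) (ν : Measure (Y₁ × Y₂))
    (c₁ : X₁ → Y₁ → ℝ≥0∞) (c₂ : X₂ → Y₂ → ℝ≥0∞) (ζ : Measure (Y₁ × X₂)) : Prop :=
  ∃ F ∈ Flows μ ν, F.1.map (fun p => (p.2, p.1.2)) = ζ ∧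
    CT c₁ c₂ F = ⨅ G ∈ Flows μ ν, CT c₁ c₂ G

namespace Stmt11Aux


variable {Z A B : Type*} [MeasurableSpace Z] [MeasurableSpace A] [MeasurableSpace B]

lemma aux_map_fst (ρ : Measure Z) [SFinite ρ] (κ : Kernel Z (A × B)) [IsSFiniteKernel κ] :
    (ρ ⊗ₘ κ).map (fun p => (p.1, p.2.1)) = ρ ⊗ₘ κ.fst := by
  ext s hs
  rw [Measure.map_apply (by fun_prop) hs,
    Measure.compProd_apply (hs.preimage (by fun_prop)), Measure.compProd_apply hs]
  refine lintegral_congr fun z => ?_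
  rw [Kernel.fst_apply' _ _ (measurable_prodMk_left hs)]
  rfl

lemma aux_map_snd (ρ : Measure Z) [SFinite ρ] (κ : Kernel Z (A × B)) [IsSFiniteKernel κ] :
    (ρ ⊗ₘ κ).map (fun p => (p.1, p.2.2)) = ρ ⊗ₘ κ.snd := by
  ext s hs
  rw [Measure.map_apply (by fun_prop) hs,
    Measure.compProd_apply (hs.preimage (by fun_prop)), Measure.compProd_apply hs]
  refine lintegral_congr fun z => ?_
  rw [Kernel.snd_apply' _ _ (measurable_prodMk_left hs)]
  rfl

lemma master [StandardBorelSpace A] [StandardBorelSpace B] [Nonempty A] [Nonempty B]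
    (ρ : Measure Z) [IsProbabilityMeasure ρ] (κ : Kernel Z (A × B)) [IsMarkovKernel κ]
    (h : ρ ⊗ₘ κ = ρ ⊗ₘ (κ.fst ×ₖ κ.snd)) :
    ∀ᵐ z ∂ρ, κ z = ((κ z).map Prod.fst).prod ((κ z).map Prod.snd) := by
  set m := ρ ⊗ₘ κ with hm
  have hfst : m.fst = ρ := Measure.fst_compProd ρ κ
  have h1 : ∀ᵐ z ∂m.fst, κ z = m.condKernel z :=
    eq_condKernel_of_measure_eq_compProd κ (by rw [hfst])
  have h2 : ∀ᵐ z ∂m.fst, (κ.fst ×ₖ κ.snd) z = m.condKernel z :=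
    eq_condKernel_of_measure_eq_compProd _ (by rw [hfst]; exact h)
  rw [hfst] at h1 h2
  filter_upwards [h1, h2] with z e1 e2
  calc κ z = (κ.fst ×ₖ κ.snd) z := e1.trans e2.symm
    _ = ((κ z).map Prod.fst).prod ((κ z).map Prod.snd) := by
        rw [Kernel.prod_apply, Kernel.fst_apply, Kernel.snd_apply]


/-- The rewiring `((y₁,x₂),(x₁,y₂)) ↦ ((x₁,x₂),(y₁,y₂))` as a measurable equivalence. -/
def eSwap (W₁ W₂ W₃ W₄ : Type*) [MeasurableSpace W₁] [MeasurableSpace W₂]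
    [MeasurableSpace W₃] [MeasurableSpace W₄] :
    ((W₁ × W₂) × (W₃ × W₄)) ≃ᵐ ((W₃ × W₂) × (W₁ × W₄)) where
  toFun p := ((p.2.1, p.1.2), (p.1.1, p.2.2))
  invFun q := ((q.2.1, q.1.2), (q.1.1, q.2.2))
  left_inv := fun ⟨⟨_, _⟩, ⟨_, _⟩⟩ => rfl
  right_inv := fun ⟨⟨_, _⟩, ⟨_, _⟩⟩ => rfl
  measurable_toFun := by
    show Measurable fun p : (W₁ × W₂) × (W₃ × W₄) => ((p.2.1, p.1.2), (p.1.1, p.2.2))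
    fun_prop
  measurable_invFun := by
    show Measurable fun q : (W₃ × W₂) × (W₁ × W₄) => ((q.2.1, q.1.2), (q.1.1, q.2.2))
    fun_prop

/-- The rewiring `((x₁,y₂),(x₂,y₁)) ↦ ((x₁,x₂),(y₁,y₂))` as a measurable equivalence. -/
def eCross (W₁ W₂ W₃ W₄ : Type*) [MeasurableSpace W₁] [MeasurableSpace W₂]
    [MeasurableSpace W₃] [MeasurableSpace W₄] :
    ((W₁ × W₂) × (W₃ × W₄)) ≃ᵐ ((W₁ × W₃) × (W₄ × W₂)) where
  toFun p := ((p.1.1, p.2.1), (p.2.2, p.1.2))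
  invFun q := ((q.1.1, q.2.2), (q.1.2, q.2.1))
  left_inv := fun ⟨⟨_, _⟩, ⟨_, _⟩⟩ => rfl
  right_inv := fun ⟨⟨_, _⟩, ⟨_, _⟩⟩ => rfl
  measurable_toFun := by
    show Measurable fun p : (W₁ × W₂) × (W₃ × W₄) => ((p.1.1, p.2.1), (p.2.2, p.1.2))
    fun_prop
  measurable_invFun := by
    show Measurable fun q : (W₁ × W₃) × (W₄ × W₂) => ((q.1.1, q.2.2), (q.1.2, q.2.1))
    fun_prop

end Stmt11Aux

theorem stmt11
    [TopologicalSpace X₁] [PolishSpace X₁] [BorelSpace X₁]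
    [TopologicalSpace X₂] [PolishSpace X₂] [BorelSpace X₂]
    [TopologicalSpace Y₁] [PolishSpace Y₁] [BorelSpace Y₁]
    [TopologicalSpace Y₂] [PolishSpace Y₂] [BorelSpace Y₂]
    (μ : Measure (X₁ × X₂)) (ν : Measure (Y₁ × Y₂))
    [IsProbabilityMeasure μ] [IsProbabilityMeasure ν]
    (c₁ : X₁ → Y₁ → ℝ≥0∞) (c₂ : X₂ → Y₂ → ℝ≥0∞)
    (hc₁ : Continuous fun p : X₁ × Y₁ => c₁ p.1 p.2)
    (hc₂ : Continuous fun p : X₂ × Y₂ => c₂ p.1 p.2)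
    (π : Measure ((X₁ × X₂) × (Y₁ × Y₂))) [IsProbabilityMeasure π]
    (hπ : IsCoupling π μ ν)
    (hopt : ∫⁻ p, c₁ p.1.1 p.2.1 + c₂ p.1.2 p.2.2 ∂π
      = Wc (fun x y => c₁ x.1 y.1 + c₂ x.2 y.2) μ ν)
    (huniq : ∀ π' : Measure ((X₁ × X₂) × (Y₁ × Y₂)), IsCoupling π' μ ν →
      ∫⁻ p, c₁ p.1.1 p.2.1 + c₂ p.1.2 p.2.2 ∂π'
        = Wc (fun x y => c₁ x.1 y.1 + c₂ x.2 y.2) μ ν → π' = π) :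
    -- X₁ and Y₂ are conditionally independent given (X₂, Y₁):
    (∀ (κ : Kernel (Y₁ × X₂) (X₁ × Y₂)) [IsMarkovKernel κ],
      π = ((π.map fun p => (p.2.1, p.1.2)) ⊗ₘ κ).map
          (fun p => ((p.2.1, p.1.2), (p.1.1, p.2.2))) →
      ∀ᵐ z ∂(π.map fun p => (p.2.1, p.1.2)),
        κ z = ((κ z).map Prod.fst).prod ((κ z).map Prod.snd)) ∧
    -- X₂ and Y₁ are conditionally independent given (X₁, Y₂):
    (∀ (η : Kernel (X₁ × Y₂) (X₂ × Y₁)) [IsMarkovKernel η],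
      π = ((π.map fun p => (p.1.1, p.2.2)) ⊗ₘ η).map
          (fun p => ((p.1.1, p.2.1), (p.2.2, p.1.2))) →
      ∀ᵐ w ∂(π.map fun p => (p.1.1, p.2.2)),
        η w = ((η w).map Prod.fst).prod ((η w).map Prod.snd)) := by
  -- nonemptiness of the four spaces
  have hne : Nonempty ((X₁ × X₂) × (Y₁ × Y₂)) := by
    by_contra h
    rw [not_nonempty_iff] at h
    have h1 : π Set.univ = 1 := measure_univ
    rw [Set.univ_eq_empty_iff.mpr h] at h1
    simp at h1
  obtain ⟨⟨⟨x₁, x₂⟩, y₁, y₂⟩⟩ := hne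
  haveI : Nonempty X₁ := ⟨x₁⟩
  haveI : Nonempty X₂ := ⟨x₂⟩
  haveI : Nonempty Y₁ := ⟨y₁⟩
  haveI : Nonempty Y₂ := ⟨y₂⟩
  have hc₁m : Measurable fun p : X₁ × Y₁ => c₁ p.1 p.2 := hc₁.measurable
  have hc₂m : Measurable fun p : X₂ × Y₂ => c₂ p.1 p.2 := hc₂.measurable
  have m1 : Measurable fun p : (X₁ × X₂) × (Y₁ × Y₂) => c₁ p.1.1 p.2.1 := by
    exact hc₁m.comp ((measurable_fst.comp measurable_fst).prodMk
      (measurable_fst.comp measurable_snd))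
  have m2 : Measurable fun p : (X₁ × X₂) × (Y₁ × Y₂) => c₂ p.1.2 p.2.2 := by
    exact hc₂m.comp ((measurable_snd.comp measurable_fst).prodMk
      (measurable_snd.comp measurable_snd))
  constructor
  · -- Case 1
    intro κ hκM hκdis
    set ρ : Measure (Y₁ × X₂) := π.map (fun p => (p.2.1, p.1.2)) with hρ
    haveI : IsProbabilityMeasure ρ :=
      Measure.isProbabilityMeasure_map (by fun_prop : Measurable fun p :
        (X₁ × X₂) × (Y₁ × Y₂) => (p.2.1, p.1.2)).aemeasurable
    set e := Stmt11Aux.eSwap Y₁ X₂ X₁ Y₂ with he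
    have hκ' : π = (ρ ⊗ₘ κ).map e := hκdis
    set κ' : Kernel (Y₁ × X₂) (X₁ × Y₂) := κ.fst ×ₖ κ.snd with hκ'def
    -- equality of first marginals
    have hfsteq : ((ρ ⊗ₘ κ').map e).map Prod.fst = ((ρ ⊗ₘ κ).map e).map Prod.fst := by
      rw [Measure.map_map measurable_fst e.measurable,
        Measure.map_map measurable_fst e.measurable]
      have hco : (Prod.fst ∘ ⇑e : (Y₁ × X₂) × (X₁ × Y₂) → X₁ × X₂)
          = (fun r : (Y₁ × X₂) × X₁ => (r.2, r.1.2)) ∘ (fun p => (p.1, p.2.1)) := rfl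
      rw [hco, ← Measure.map_map (by fun_prop) (by fun_prop),
        ← Measure.map_map (by fun_prop) (by fun_prop),
        Stmt11Aux.aux_map_fst, Stmt11Aux.aux_map_fst, hκ'def, Kernel.fst_prod]
    have hsndeq : ((ρ ⊗ₘ κ').map e).map Prod.snd = ((ρ ⊗ₘ κ).map e).map Prod.snd := by
      rw [Measure.map_map measurable_snd e.measurable,
        Measure.map_map measurable_snd e.measurable]
      have hco : (Prod.snd ∘ ⇑e : (Y₁ × X₂) × (X₁ × Y₂) → Y₁ × Y₂)
          = (fun r : (Y₁ × X₂) × Y₂ => (r.1.1, r.2)) ∘ (fun p => (p.1, p.2.2)) := rfl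
      rw [hco, ← Measure.map_map (by fun_prop) (by fun_prop),
        ← Measure.map_map (by fun_prop) (by fun_prop),
        Stmt11Aux.aux_map_snd, Stmt11Aux.aux_map_snd, hκ'def, Kernel.snd_prod]
    -- equality of costs
    have hcosteq : ∫⁻ p, c₁ p.1.1 p.2.1 + c₂ p.1.2 p.2.2 ∂((ρ ⊗ₘ κ').map e)
        = ∫⁻ p, c₁ p.1.1 p.2.1 + c₂ p.1.2 p.2.2 ∂((ρ ⊗ₘ κ).map e) := by
      have mE : Measurable fun q : (Y₁ × X₂) × (X₁ × Y₂) =>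
          c₁ (e q).1.1 (e q).2.1 + c₂ (e q).1.2 (e q).2.2 := by
        exact (m1.add m2).comp e.measurable
      rw [lintegral_map (show Measurable fun p : (X₁ × X₂) × (Y₁ × Y₂) => c₁ p.1.1 p.2.1 + c₂ p.1.2 p.2.2 from m1.add m2) e.measurable,
        lintegral_map (show Measurable fun p : (X₁ × X₂) × (Y₁ × Y₂) => c₁ p.1.1 p.2.1 + c₂ p.1.2 p.2.2 from m1.add m2) e.measurable,
        Measure.lintegral_compProd mE, Measure.lintegral_compProd mE]
      refine lintegral_congr fun z => ?_
      show ∫⁻ ab, c₁ ab.1 z.1 + c₂ z.2 ab.2 ∂(κ' z) = ∫⁻ ab, c₁ ab.1 z.1 + c₂ z.2 ab.2 ∂(κ z)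
      have hfz : (κ' z).map Prod.fst = (κ z).map Prod.fst := by
        rw [← Kernel.fst_apply, ← Kernel.fst_apply, hκ'def, Kernel.fst_prod]
      have hsz : (κ' z).map Prod.snd = (κ z).map Prod.snd := by
        rw [← Kernel.snd_apply, ← Kernel.snd_apply, hκ'def, Kernel.snd_prod]
      have mf : Measurable fun a : X₁ => c₁ a z.1 := by
        exact hc₁m.comp (measurable_id.prodMk measurable_const)
      have ms : Measurable fun b : Y₂ => c₂ z.2 b := by
        exact hc₂m.comp (measurable_const.prodMk measurable_id)
      have mf' : Measurable fun ab : X₁ × Y₂ => c₁ ab.1 z.1 := by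
        exact mf.comp measurable_fst
      rw [lintegral_add_left mf', lintegral_add_left mf']
      congr 1
      · calc ∫⁻ ab, c₁ ab.1 z.1 ∂(κ' z)
            = ∫⁻ a, c₁ a z.1 ∂((κ' z).map Prod.fst) := (lintegral_map mf measurable_fst).symm
          _ = ∫⁻ a, c₁ a z.1 ∂((κ z).map Prod.fst) := by rw [hfz]
          _ = ∫⁻ ab, c₁ ab.1 z.1 ∂(κ z) := lintegral_map mf measurable_fst
      · calc ∫⁻ ab, c₂ z.2 ab.2 ∂(κ' z)
            = ∫⁻ b, c₂ z.2 b ∂((κ' z).map Prod.snd) := (lintegral_map ms measurable_snd).symm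
          _ = ∫⁻ b, c₂ z.2 b ∂((κ z).map Prod.snd) := by rw [hsz]
          _ = ∫⁻ ab, c₂ z.2 ab.2 ∂(κ z) := lintegral_map ms measurable_snd
    haveI : IsProbabilityMeasure ((ρ ⊗ₘ κ').map e) :=
      Measure.isProbabilityMeasure_map e.measurable.aemeasurable
    have hcoup : IsCoupling ((ρ ⊗ₘ κ').map e) μ ν := by
      constructor
      · rw [hfsteq, ← hκ']; exact hπ.1
      · rw [hsndeq, ← hκ']; exact hπ.2
    have hπ'opt : ∫⁻ p, c₁ p.1.1 p.2.1 + c₂ p.1.2 p.2.2 ∂((ρ ⊗ₘ κ').map e)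
        = Wc (fun x y => c₁ x.1 y.1 + c₂ x.2 y.2) μ ν := by
      rw [hcosteq, ← hκ']; exact hopt
    have hEq : (ρ ⊗ₘ κ').map e = (ρ ⊗ₘ κ).map e :=
      (huniq _ hcoup hπ'opt).trans hκ'
    have hEq2 : ρ ⊗ₘ κ' = ρ ⊗ₘ κ := by
      have h3 := congrArg (Measure.map ⇑e.symm) hEq
      rwa [Measure.map_map e.symm.measurable e.measurable,
        Measure.map_map e.symm.measurable e.measurable,
        MeasurableEquiv.symm_comp_self, Measure.map_id, Measure.map_id] at h3
    exact Stmt11Aux.master ρ κ (hκ'def ▸ hEq2.symm)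
  · -- Case 2
    intro η hηM hηdis
    set ρ : Measure (X₁ × Y₂) := π.map (fun p => (p.1.1, p.2.2)) with hρ
    haveI : IsProbabilityMeasure ρ :=
      Measure.isProbabilityMeasure_map (by fun_prop : Measurable fun p :
        (X₁ × X₂) × (Y₁ × Y₂) => (p.1.1, p.2.2)).aemeasurable
    set e := Stmt11Aux.eCross X₁ Y₂ X₂ Y₁ with he
    have hκ' : π = (ρ ⊗ₘ η).map e := hηdis
    set η' : Kernel (X₁ × Y₂) (X₂ × Y₁) := η.fst ×ₖ η.snd with hη'def
    have hfsteq : ((ρ ⊗ₘ η').map e).map Prod.fst = ((ρ ⊗ₘ η).map e).map Prod.fst := by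
      rw [Measure.map_map measurable_fst e.measurable,
        Measure.map_map measurable_fst e.measurable]
      have hco : (Prod.fst ∘ ⇑e : (X₁ × Y₂) × (X₂ × Y₁) → X₁ × X₂)
          = (fun r : (X₁ × Y₂) × X₂ => (r.1.1, r.2)) ∘ (fun p => (p.1, p.2.1)) := rfl
      rw [hco, ← Measure.map_map (by fun_prop) (by fun_prop),
        ← Measure.map_map (by fun_prop) (by fun_prop),
        Stmt11Aux.aux_map_fst, Stmt11Aux.aux_map_fst, hη'def, Kernel.fst_prod]
    have hsndeq : ((ρ ⊗ₘ η').map e).map Prod.snd = ((ρ ⊗ₘ η).map e).map Prod.snd := by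
      rw [Measure.map_map measurable_snd e.measurable,
        Measure.map_map measurable_snd e.measurable]
      have hco : (Prod.snd ∘ ⇑e : (X₁ × Y₂) × (X₂ × Y₁) → Y₁ × Y₂)
          = (fun r : (X₁ × Y₂) × Y₁ => (r.2, r.1.2)) ∘ (fun p => (p.1, p.2.2)) := rfl
      rw [hco, ← Measure.map_map (by fun_prop) (by fun_prop),
        ← Measure.map_map (by fun_prop) (by fun_prop),
        Stmt11Aux.aux_map_snd, Stmt11Aux.aux_map_snd, hη'def, Kernel.snd_prod]
    have hcosteq : ∫⁻ p, c₁ p.1.1 p.2.1 + c₂ p.1.2 p.2.2 ∂((ρ ⊗ₘ η').map e)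
        = ∫⁻ p, c₁ p.1.1 p.2.1 + c₂ p.1.2 p.2.2 ∂((ρ ⊗ₘ η).map e) := by
      have mE : Measurable fun q : (X₁ × Y₂) × (X₂ × Y₁) =>
          c₁ (e q).1.1 (e q).2.1 + c₂ (e q).1.2 (e q).2.2 := by
        exact (m1.add m2).comp e.measurable
      rw [lintegral_map (show Measurable fun p : (X₁ × X₂) × (Y₁ × Y₂) => c₁ p.1.1 p.2.1 + c₂ p.1.2 p.2.2 from m1.add m2) e.measurable,
        lintegral_map (show Measurable fun p : (X₁ × X₂) × (Y₁ × Y₂) => c₁ p.1.1 p.2.1 + c₂ p.1.2 p.2.2 from m1.add m2) e.measurable,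
        Measure.lintegral_compProd mE, Measure.lintegral_compProd mE]
      refine lintegral_congr fun w => ?_
      show ∫⁻ ab, c₁ w.1 ab.2 + c₂ ab.1 w.2 ∂(η' w) = ∫⁻ ab, c₁ w.1 ab.2 + c₂ ab.1 w.2 ∂(η w)
      have hfz : (η' w).map Prod.fst = (η w).map Prod.fst := by
        rw [← Kernel.fst_apply, ← Kernel.fst_apply, hη'def, Kernel.fst_prod]
      have hsz : (η' w).map Prod.snd = (η w).map Prod.snd := by
        rw [← Kernel.snd_apply, ← Kernel.snd_apply, hη'def, Kernel.snd_prod]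
      have mf : Measurable fun b : Y₁ => c₁ w.1 b := by
        exact hc₁m.comp (measurable_const.prodMk measurable_id)
      have ms : Measurable fun a : X₂ => c₂ a w.2 := by
        exact hc₂m.comp (measurable_id.prodMk measurable_const)
      have mf' : Measurable fun ab : X₂ × Y₁ => c₁ w.1 ab.2 := by
        exact mf.comp measurable_snd
      rw [lintegral_add_left mf', lintegral_add_left mf']
      congr 1
      · calc ∫⁻ ab, c₁ w.1 ab.2 ∂(η' w)
            = ∫⁻ b, c₁ w.1 b ∂((η' w).map Prod.snd) := (lintegral_map mf measurable_snd).symm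
          _ = ∫⁻ b, c₁ w.1 b ∂((η w).map Prod.snd) := by rw [hsz]
          _ = ∫⁻ ab, c₁ w.1 ab.2 ∂(η w) := lintegral_map mf measurable_snd
      · calc ∫⁻ ab, c₂ ab.1 w.2 ∂(η' w)
            = ∫⁻ a, c₂ a w.2 ∂((η' w).map Prod.fst) := (lintegral_map ms measurable_fst).symm
          _ = ∫⁻ a, c₂ a w.2 ∂((η w).map Prod.fst) := by rw [hfz]
          _ = ∫⁻ ab, c₂ ab.1 w.2 ∂(η w) := lintegral_map ms measurable_fst
    haveI : IsProbabilityMeasure ((ρ ⊗ₘ η').map e) :=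
      Measure.isProbabilityMeasure_map e.measurable.aemeasurable
    have hcoup : IsCoupling ((ρ ⊗ₘ η').map e) μ ν := by
      constructor
      · rw [hfsteq, ← hκ']; exact hπ.1
      · rw [hsndeq, ← hκ']; exact hπ.2
    have hπ'opt : ∫⁻ p, c₁ p.1.1 p.2.1 + c₂ p.1.2 p.2.2 ∂((ρ ⊗ₘ η').map e)
        = Wc (fun x y => c₁ x.1 y.1 + c₂ x.2 y.2) μ ν := by
      rw [hcosteq, ← hκ']; exact hopt
    have hEq : (ρ ⊗ₘ η').map e = (ρ ⊗ₘ η).map e :=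
      (huniq _ hcoup hπ'opt).trans hκ'
    have hEq2 : ρ ⊗ₘ η' = ρ ⊗ₘ η := by
      have h3 := congrArg (Measure.map ⇑e.symm) hEq
      rwa [Measure.map_map e.symm.measurable e.measurable,
        Measure.map_map e.symm.measurable e.measurable,
        MeasurableEquiv.symm_comp_self, Measure.map_id, Measure.map_id] at h3
    exact Stmt11Aux.master ρ η (hη'def ▸ hEq2.symm)
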